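/- arXiv:math/0412363 — 3 statements merged into one kernel-verified Lean document; each statement's English description precedes it below -/
import Mathlib

section
/- Let F be a path-connected and simply connected topological space, let B be a path-connected paracompact topological space, and let proj : Z → B be a fiber bundle with fiber F. Then for every z ∈ Z, the induced homomorphism proj_* : π₁(Z, z) → π₁(B, proj z) on fundamental groups is an isomorphism. -/
open CategoryTheory FundamentalGroupoid

universe u

open Set

attribute [local instance] Path.Homotopic.setoid

section Lift

open Set

theorem glue_closed {X Y : Type*} [TopologicalSpace X] [TopologicalSpace Y]
    {s t : Set X} [∀ x : X, Decidable (x ∈ s)] (hs : IsClosed s) (ht : IsClosed t)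
    {f g : X → Y} (hf : ContinuousOn f s) (hg : ContinuousOn g t)
    (heq : EqOn f g (s ∩ t)) :
    ContinuousOn (fun x => if x ∈ s then f x else g x) (s ∪ t) := by
  intro x hx
  set h : X → Y := fun x => if x ∈ s then f x else g x with hh
  have heqs : EqOn h f s := fun y hy => by simp only [hh, if_pos hy]
  have heqt : EqOn h g t := by
    intro y hy
    by_cases hys : y ∈ s
    · simpa only [hh, if_pos hys] using heq ⟨hys, hy⟩
    · simp only [hh, if_neg hys]
  have hcs : ∀ y ∈ s, ContinuousWithinAt h s y := fun y hy =>
    ((hf y hy).congr heqs (heqs hy))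
  have hct : ∀ y ∈ t, ContinuousWithinAt h t y := fun y hy =>
    ((hg y hy).congr heqt (heqt hy))
  rcases hx with hxs | hxt
  · apply ContinuousWithinAt.union (hcs x hxs)
    by_cases hxt : x ∈ t
    · exact hct x hxt
    · exact continuousWithinAt_of_notMem_closure (by rwa [ht.closure_eq])
  · refine ContinuousWithinAt.union ?_ (hct x hxt)
    by_cases hxs : x ∈ s
    · exact hcs x hxs
    · exact continuousWithinAt_of_notMem_closure (by rwa [hs.closure_eq])

variable {F B Z : Type*} [TopologicalSpace F] [TopologicalSpace B] [TopologicalSpace Z]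
variable {proj : Z → B}

theorem rect_lift (e : Bundle.Trivialization F proj) {R J : Set (ℝ × ℝ)} (hJR : J ⊆ R)
    {r : ℝ × ℝ → ℝ × ℝ} (hr : ContinuousOn r R) (hrJ : MapsTo r R J)
    (hrid : ∀ x ∈ J, r x = x)
    {K : ℝ × ℝ → B} (hK : Continuous K) (hKR : ∀ x ∈ R, K x ∈ e.baseSet)
    {L : ℝ × ℝ → Z} (hL : ContinuousOn L J) (hLproj : ∀ x ∈ J, proj (L x) = K x) :
    ∃ M : ℝ × ℝ → Z, ContinuousOn M R ∧ (∀ x ∈ R, proj (M x) = K x) ∧ ∀ x ∈ J, M x = L x := by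
  have hLsource : ∀ x ∈ J, L x ∈ e.source := fun x hx =>
    e.mem_source.2 (by rw [hLproj x hx]; exact hKR x (hJR hx))
  refine ⟨fun x => e.toPartialHomeomorph.symm (K x, (e (L (r x))).2), ?_, ?_, ?_⟩
  · have h1 : ContinuousOn (fun x => L (r x)) R := hL.comp hr hrJ
    have hecont : ContinuousOn (⇑e) e.source := e.continuousOn_toFun
    have h2' : ContinuousOn (fun x => e (L (r x))) R := by
      refine ContinuousOn.comp (f := fun x => L (r x)) (g := ⇑e) hecont h1 ?_
      exact fun x hx => hLsource _ (hrJ hx)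
    have h2 : ContinuousOn (fun x => (e (L (r x))).2) R := h2'.snd
    have h3 : ContinuousOn (fun x => ((K x, (e (L (r x))).2) : B × F)) R :=
      (hK.continuousOn).prodMk h2
    refine e.toPartialHomeomorph.continuousOn_symm.comp h3 ?_
    intro x hx
    rw [e.target_eq]
    exact ⟨hKR x hx, mem_univ _⟩
  · intro x hx
    exact e.proj_symm_apply' (hKR x hx)
  · intro x hx
    show e.toPartialHomeomorph.symm (K x, (e (L (r x))).2) = L x
    rw [hrid x hx, ← hLproj x hx]
    exact e.symm_apply_mk_proj (hLsource x hx)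

theorem strip_lift {K : ℝ × ℝ → B} (hK : Continuous K) {a b : ℝ} (hab : a ≤ b)
    {N : ℕ} (hN : 0 < N) {u : ℕ → ℝ} (hu0 : u 0 = 0) (huN : u N = 1)
    (humono : ∀ k, u k ≤ u (k + 1))
    (he : ∀ j < N, ∃ e : Bundle.Trivialization F proj,
      ∀ x ∈ Icc a b ×ˢ Icc (u j) (u (j + 1)), K x ∈ e.baseSet)
    {g : ℝ → Z} (hg : ContinuousOn g (Icc 0 1))
    (hgproj : ∀ t ∈ Icc (0:ℝ) 1, proj (g t) = K (a, t)) :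
    ∃ L : ℝ × ℝ → Z, ContinuousOn L (Icc a b ×ˢ Icc 0 1) ∧
      (∀ x ∈ Icc a b ×ˢ Icc (0:ℝ) 1, proj (L x) = K x) ∧
      (∀ t ∈ Icc (0:ℝ) 1, L (a, t) = g t) := by
  classical
  have hmono : Monotone u := monotone_nat_of_le_succ humono
  have hu_nonneg : ∀ j, 0 ≤ u j := fun j => hu0 ▸ hmono (Nat.zero_le j)
  have hu_le_one : ∀ j, j ≤ N → u j ≤ 1 := fun j hj => huN ▸ hmono hj
  have hleft_closed : IsClosed ({a} ×ˢ Icc (0:ℝ) 1) := isClosed_singleton.prod isClosed_Icc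
  have main : ∀ j, j ≤ N → ∃ L : ℝ × ℝ → Z,
      ContinuousOn L (({a} ×ˢ Icc (0:ℝ) 1) ∪ (Icc a b ×ˢ Icc 0 (u j))) ∧
      (∀ x ∈ ({a} ×ˢ Icc (0:ℝ) 1) ∪ (Icc a b ×ˢ Icc 0 (u j)), proj (L x) = K x) ∧
      (∀ t ∈ Icc (0:ℝ) 1, L (a, t) = g t) := by
    intro j
    induction j with
    | zero =>
      intro _
      obtain ⟨e, hetriv⟩ := he 0 hN
      obtain ⟨M, hMcont, hMproj, hMJ⟩ := rect_lift (proj := proj) e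
        (R := Icc a b ×ˢ Icc (0:ℝ) 0) (J := {((a : ℝ), (0 : ℝ))})
        (by intro x hx; rw [mem_singleton_iff] at hx; rw [hx]
            exact ⟨⟨le_refl a, hab⟩, le_refl 0, le_refl 0⟩)
        (r := fun _ => ((a : ℝ), (0 : ℝ))) continuousOn_const
        (fun x _ => rfl)
        (by intro x hx; rw [mem_singleton_iff] at hx; exact hx.symm)
        hK
        (by intro x hx
            refine hetriv x ⟨hx.1, ?_⟩
            rw [hu0]
            exact ⟨hx.2.1, hx.2.2.trans (hu0 ▸ humono 0)⟩)
        (L := fun _ => g 0) continuousOn_const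
        (by intro x hx; rw [mem_singleton_iff] at hx; rw [hx]
            exact hgproj 0 ⟨le_refl 0, zero_le_one⟩)
      have hu0' : Icc (0:ℝ) (u 0) = Icc (0:ℝ) 0 := by rw [hu0]
      refine ⟨fun x => if x ∈ ({a} ×ˢ Icc (0:ℝ) 1) then g x.2 else M x, ?_, ?_, ?_⟩
      · rw [hu0']
        refine glue_closed hleft_closed (isClosed_Icc.prod isClosed_Icc)
          (hg.comp continuous_snd.continuousOn ?_) hMcont ?_
        · rintro ⟨x1, x2⟩ ⟨_, hx2⟩
          exact hx2
        · rintro ⟨x1, x2⟩ ⟨⟨hx1, _⟩, _, hx2⟩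
          rw [mem_singleton_iff] at hx1
          have hx2' : x2 = 0 := le_antisymm hx2.2 hx2.1
          show g x2 = M (x1, x2)
          rw [show x1 = a from hx1, hx2']
          exact (hMJ _ rfl).symm
      · rintro ⟨x1, x2⟩ hx
        by_cases hxl : ((x1 : ℝ), (x2 : ℝ)) ∈ ({a} ×ˢ Icc (0:ℝ) 1)
        · simp only [if_pos hxl]
          obtain ⟨hx1, hx2⟩ := hxl
          rw [mem_singleton_iff] at hx1
          rw [hgproj x2 hx2, show x1 = a from hx1]
        · simp only [if_neg hxl]
          rcases hx with hx | hx
          · exact absurd hx hxl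
          · exact hMproj _ ⟨hx.1, hx.2.1, hx.2.2.trans_eq hu0⟩
      · intro t ht
        have hmem : ((a : ℝ), t) ∈ ({a} ×ˢ Icc (0:ℝ) 1) := ⟨rfl, ht⟩
        simp only [if_pos hmem]
    | succ j ih =>
      intro hjN
      have hjN' : j < N := hjN
      obtain ⟨L, hLcont, hLproj, hLedge⟩ := ih (Nat.le_of_succ_le hjN)
      obtain ⟨e, hetriv⟩ := he j hjN'
      have hJS : (({a} ×ˢ Icc (u j) (u (j+1))) ∪ (Icc a b ×ˢ {u j}) : Set (ℝ × ℝ)) ⊆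
          Icc a b ×ˢ Icc (u j) (u (j + 1)) := by
        rintro ⟨x1, x2⟩ (⟨hx1, hx2⟩ | ⟨hx1, hx2⟩)
        · rw [mem_singleton_iff] at hx1
          exact ⟨⟨hx1.ge, hx1.le.trans hab⟩, hx2⟩
        · rw [mem_singleton_iff] at hx2
          exact ⟨hx1, ⟨hx2.ge, hx2.le.trans (humono j)⟩⟩
      have hJEj : (({a} ×ˢ Icc (u j) (u (j+1))) ∪ (Icc a b ×ˢ {u j}) : Set (ℝ × ℝ)) ⊆
          ({a} ×ˢ Icc (0:ℝ) 1) ∪ (Icc a b ×ˢ Icc 0 (u j)) := by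
        rintro ⟨x1, x2⟩ (⟨hx1, hx2⟩ | ⟨hx1, hx2⟩)
        · exact Or.inl ⟨hx1, (hu_nonneg j).trans hx2.1, hx2.2.trans (hu_le_one (j+1) hjN)⟩
        · rw [mem_singleton_iff] at hx2
          exact Or.inr ⟨hx1, ⟨(hu_nonneg j).trans_eq hx2.symm, hx2.le⟩⟩
      obtain ⟨M, hMcont, hMproj, hMJ⟩ := rect_lift (proj := proj) e hJS
        (r := fun x => (x.1 - min (x.1 - a) (x.2 - u j), x.2 - min (x.1 - a) (x.2 - u j)))
        (by fun_prop)
        (by rintro ⟨x1, x2⟩ ⟨hx1, hx2⟩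
            simp only [mem_Icc] at hx1 hx2
            show (x1 - min (x1 - a) (x2 - u j), x2 - min (x1 - a) (x2 - u j)) ∈ _
            rcases le_total (x1 - a) (x2 - u j) with hmin | hmin
            · rw [min_eq_left hmin]
              refine Or.inl ⟨by simp, ?_⟩
              refine ⟨show u j ≤ x2 - (x1 - a) by linarith [hx1.1],
                show x2 - (x1 - a) ≤ u (j+1) by
                  have h0 : 0 ≤ x1 - a := by linarith [hx1.1]
                  linarith [hx2.2]⟩
            · rw [min_eq_right hmin]
              refine Or.inr ⟨?_, by simp⟩
              exact ⟨show a ≤ x1 - (x2 - u j) by linarith [hx2.1],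
                show x1 - (x2 - u j) ≤ b by
                  have h0 : 0 ≤ x2 - u j := by linarith [hx2.1]
                  linarith [hx1.2]⟩)
        (by rintro ⟨x1, x2⟩ (⟨hx1, hx2⟩ | ⟨hx1, hx2⟩)
            · rw [mem_singleton_iff] at hx1
              have hm : min (x1 - a) (x2 - u j) = 0 := by
                rw [show x1 = a from hx1, sub_self]
                exact min_eq_left (by linarith [show u j ≤ x2 from hx2.1])
              show (x1 - min (x1 - a) (x2 - u j), x2 - min (x1 - a) (x2 - u j)) = _
              rw [hm, sub_zero, sub_zero]
            · rw [mem_singleton_iff] at hx2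
              have hm : min (x1 - a) (x2 - u j) = 0 := by
                rw [show x2 = u j from hx2, sub_self]
                exact min_eq_right (by linarith [show a ≤ x1 from hx1.1])
              show (x1 - min (x1 - a) (x2 - u j), x2 - min (x1 - a) (x2 - u j)) = _
              rw [hm, sub_zero, sub_zero])
        hK hetriv (hLcont.mono hJEj) (fun x hx => hLproj x (hJEj hx))
      refine ⟨fun x => if x ∈ ({a} ×ˢ Icc (0:ℝ) 1) ∪ (Icc a b ×ˢ Icc 0 (u j)) then L x else M x,
        ?_, ?_, ?_⟩
      · have hunion : ({a} ×ˢ Icc (0:ℝ) 1) ∪ (Icc a b ×ˢ Icc 0 (u (j+1))) =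
            (({a} ×ˢ Icc (0:ℝ) 1) ∪ (Icc a b ×ˢ Icc 0 (u j))) ∪
            (Icc a b ×ˢ Icc (u j) (u (j+1))) := by
          apply Subset.antisymm
          · rintro ⟨x1, x2⟩ (hx | ⟨hx1, hx2⟩)
            · exact Or.inl (Or.inl hx)
            · rcases le_total x2 (u j) with h | h
              · exact Or.inl (Or.inr ⟨hx1, hx2.1, h⟩)
              · exact Or.inr ⟨hx1, h, hx2.2⟩
          · rintro ⟨x1, x2⟩ ((hx | ⟨hx1, hx2⟩) | ⟨hx1, hx2⟩)
            · exact Or.inl hx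
            · exact Or.inr ⟨hx1, hx2.1, hx2.2.trans (humono j)⟩
            · exact Or.inr ⟨hx1, (hu_nonneg j).trans hx2.1, hx2.2⟩
        rw [hunion]
        refine glue_closed (hleft_closed.union (isClosed_Icc.prod isClosed_Icc))
          (isClosed_Icc.prod isClosed_Icc) hLcont hMcont ?_
        rintro ⟨x1, x2⟩ ⟨hxE, hxS⟩
        have hxJ : ((x1 : ℝ), x2) ∈ ({a} ×ˢ Icc (u j) (u (j+1))) ∪ (Icc a b ×ˢ {u j}) := by
          rcases hxE with ⟨hx1, _⟩ | ⟨_, hx2⟩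
          · exact Or.inl ⟨hx1, hxS.2⟩
          · exact Or.inr ⟨hxS.1, le_antisymm hx2.2 hxS.2.1⟩
        exact (hMJ _ hxJ).symm
      · rintro ⟨x1, x2⟩ hx
        by_cases hxE : ((x1 : ℝ), x2) ∈ ({a} ×ˢ Icc (0:ℝ) 1) ∪ (Icc a b ×ˢ Icc 0 (u j))
        · simp only [if_pos hxE]
          exact hLproj _ hxE
        · simp only [if_neg hxE]
          refine hMproj _ ?_
          rcases hx with hx | ⟨hx1, hx2⟩
          · exact absurd (Or.inl hx) hxE
          · rcases le_total x2 (u j) with h | h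
            · exact absurd (Or.inr ⟨hx1, hx2.1, h⟩) hxE
            · exact ⟨hx1, h, hx2.2⟩
      · intro t ht
        have hmem : ((a : ℝ), t) ∈ ({a} ×ˢ Icc (0:ℝ) 1) ∪ (Icc a b ×ˢ Icc 0 (u j)) :=
          Or.inl ⟨rfl, ht⟩
        simp only [if_pos hmem]
        exact hLedge t ht
  obtain ⟨L, hLcont, hLproj, hLedge⟩ := main N (le_refl N)
  have hEN : Icc a b ×ˢ Icc (0:ℝ) 1 ⊆ ({a} ×ˢ Icc (0:ℝ) 1) ∪ (Icc a b ×ˢ Icc 0 (u N)) := by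
    intro x hx
    exact Or.inr (by rwa [huN])
  exact ⟨L, hLcont.mono hEN, fun x hx => hLproj x (hEN hx), hLedge⟩

theorem square_lift (htriv : ∀ b : B, ∃ e : Bundle.Trivialization F proj, b ∈ e.baseSet)
    {K : ℝ × ℝ → B} (hK : Continuous K) {γ : ℝ → Z} (hγ : Continuous γ)
    (hγproj : ∀ t, proj (γ t) = K (0, t)) :
    ∃ L : ℝ × ℝ → Z, ContinuousOn L (Icc 0 1 ×ˢ Icc 0 1) ∧
      (∀ x ∈ Icc (0:ℝ) 1 ×ˢ Icc (0:ℝ) 1, proj (L x) = K x) ∧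
      (∀ t ∈ Icc (0:ℝ) 1, L (0, t) = γ t) := by
  classical
  have hQ : IsCompact (Icc (0:ℝ) 1 ×ˢ Icc (0:ℝ) 1) := isCompact_Icc.prod isCompact_Icc
  choose eb heb using htriv
  obtain ⟨δ, hδ, hball⟩ := lebesgue_number_lemma_of_metric hQ
    (c := fun b => K ⁻¹' (eb b).baseSet)
    (fun b => (eb b).open_baseSet.preimage hK)
    (fun x _ => mem_iUnion.2 ⟨K x, heb (K x)⟩)
  obtain ⟨n, hn⟩ := exists_nat_one_div_lt hδ
  set N : ℕ := n + 1 with hNdef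
  have hN : 0 < N := Nat.succ_pos n
  have hNpos : (0:ℝ) < (N:ℝ) := by positivity
  set u : ℕ → ℝ := fun k => (k : ℝ) / N with hu
  have hu0 : u 0 = 0 := by simp [hu]
  have huN : u N = 1 := by show (N : ℝ) / N = 1; exact div_self hNpos.ne'
  have humono : ∀ k, u k ≤ u (k + 1) := by
    intro k
    show (k : ℝ) / N ≤ ((k + 1 : ℕ) : ℝ) / N
    gcongr
    exact_mod_cast Nat.le_succ k
  have hmono : Monotone u := monotone_nat_of_le_succ humono
  have hu_nonneg : ∀ j, 0 ≤ u j := fun j => hu0 ▸ hmono (Nat.zero_le j)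
  have hu_le_one : ∀ j, j ≤ N → u j ≤ 1 := fun j hj => huN ▸ hmono hj
  have hstep : ∀ k, u (k + 1) - u k = 1 / N := by
    intro k
    show ((k + 1 : ℕ) : ℝ) / N - (k : ℝ) / N = 1 / N
    push_cast
    ring
  have hdeltaN : 1 / (N : ℝ) < δ := by
    refine lt_of_le_of_lt (le_of_eq ?_) hn
    rw [hNdef]
    push_cast
    ring
  have key : ∀ i j : ℕ, i < N → j < N → ∃ e : Bundle.Trivialization F proj,
      ∀ x ∈ Icc (u i) (u (i+1)) ×ˢ Icc (u j) (u (j+1)), K x ∈ e.baseSet := by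
    intro i j hi hj
    have hcorner : ((u i, u j) : ℝ × ℝ) ∈ Icc (0:ℝ) 1 ×ˢ Icc (0:ℝ) 1 :=
      ⟨⟨hu_nonneg i, hu_le_one i hi.le⟩, ⟨hu_nonneg j, hu_le_one j hj.le⟩⟩
    obtain ⟨b, hb⟩ := hball (u i, u j) hcorner
    refine ⟨eb b, fun x hx => hb ?_⟩
    have h1 : |x.1 - u i| < δ := by
      rw [abs_sub_lt_iff]
      constructor
      · have := hx.1.2
        have h2 := hstep i
        nlinarith [hx.1.1]
      · nlinarith [hx.1.1, hδ]
    have h2 : |x.2 - u j| < δ := by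
      rw [abs_sub_lt_iff]
      constructor
      · have := hx.2.2
        have h2 := hstep j
        nlinarith [hx.2.1]
      · nlinarith [hx.2.1, hδ]
    rw [Metric.mem_ball, Prod.dist_eq]
    rw [max_lt_iff]
    constructor
    · rwa [Real.dist_eq]
    · rwa [Real.dist_eq]
  -- outer induction over vertical strips
  have main : ∀ i, i ≤ N → ∃ L : ℝ × ℝ → Z,
      ContinuousOn L (Icc 0 (u i) ×ˢ Icc (0:ℝ) 1) ∧
      (∀ x ∈ Icc (0:ℝ) (u i) ×ˢ Icc (0:ℝ) 1, proj (L x) = K x) ∧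
      (∀ t ∈ Icc (0:ℝ) 1, L (0, t) = γ t) := by
    intro i
    induction i with
    | zero =>
      intro _
      refine ⟨fun x => γ x.2, hγ.comp continuous_snd |>.continuousOn, ?_, fun t _ => rfl⟩
      rintro ⟨x1, x2⟩ ⟨hx1, _⟩
      have hx1' : x1 = 0 := by
        have h := hx1.2
        rw [hu0] at h
        exact le_antisymm h hx1.1
      show proj (γ x2) = K (x1, x2)
      rw [hγproj x2, hx1']
    | succ i ih =>
      intro hiN
      have hiN' : i < N := hiN
      obtain ⟨L, hLcont, hLproj, hLedge⟩ := ih (Nat.le_of_succ_le hiN)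
      obtain ⟨Ls, hLscont, hLsproj, hLsedge⟩ := strip_lift (proj := proj) hK (humono i) hN hu0
        huN humono (fun j hj => key i j hiN' hj)
        (g := fun t => L (u i, t))
        (by refine hLcont.comp (by fun_prop) ?_
            intro t ht
            exact ⟨⟨hu_nonneg i, le_refl _⟩, ht⟩)
        (fun t ht => hLproj (u i, t) ⟨⟨hu_nonneg i, le_refl _⟩, ht⟩)
      refine ⟨fun x => if x ∈ Icc (0:ℝ) (u i) ×ˢ Icc (0:ℝ) 1 then L x else Ls x, ?_, ?_, ?_⟩
      · have hunion : Icc (0:ℝ) (u (i+1)) ×ˢ Icc (0:ℝ) 1 =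
            (Icc (0:ℝ) (u i) ×ˢ Icc (0:ℝ) 1) ∪ (Icc (u i) (u (i+1)) ×ˢ Icc (0:ℝ) 1) := by
          apply Subset.antisymm
          · rintro ⟨x1, x2⟩ ⟨hx1, hx2⟩
            rcases le_total x1 (u i) with h | h
            · exact Or.inl ⟨⟨hx1.1, h⟩, hx2⟩
            · exact Or.inr ⟨⟨h, hx1.2⟩, hx2⟩
          · rintro ⟨x1, x2⟩ (⟨hx1, hx2⟩ | ⟨hx1, hx2⟩)
            · exact ⟨⟨hx1.1, hx1.2.trans (humono i)⟩, hx2⟩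
            · exact ⟨⟨(hu_nonneg i).trans hx1.1, hx1.2⟩, hx2⟩
        rw [hunion]
        refine glue_closed (isClosed_Icc.prod isClosed_Icc) (isClosed_Icc.prod isClosed_Icc)
          hLcont hLscont ?_
        rintro ⟨x1, x2⟩ ⟨⟨hx1, hx2⟩, ⟨hx1', hx2'⟩⟩
        have hx1'' : x1 = u i := le_antisymm hx1.2 hx1'.1
        show L (x1, x2) = Ls (x1, x2)
        rw [show x1 = u i from hx1'']
        exact (hLsedge x2 hx2).symm
      · rintro ⟨x1, x2⟩ ⟨hx1, hx2⟩
        by_cases hxD : ((x1:ℝ), x2) ∈ Icc (0:ℝ) (u i) ×ˢ Icc (0:ℝ) 1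
        · simp only [if_pos hxD]
          exact hLproj _ hxD
        · simp only [if_neg hxD]
          refine hLsproj _ ⟨⟨?_, hx1.2⟩, hx2⟩
          by_contra h
          push_neg at h
          exact hxD ⟨⟨hx1.1, h.le⟩, hx2⟩
      · intro t ht
        have hmem : ((0:ℝ), t) ∈ Icc (0:ℝ) (u i) ×ˢ Icc (0:ℝ) 1 :=
          ⟨⟨le_refl 0, hu_nonneg i⟩, ht⟩
        simp only [if_pos hmem]
        exact hLedge t ht
  obtain ⟨L, hLcont, hLproj, hLedge⟩ := main N (le_refl N)
  rw [huN] at hLcont hLproj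
  exact ⟨L, hLcont, hLproj, hLedge⟩

end Lift

section Hom

open Set CategoryTheory FundamentalGroupoid

attribute [local instance] Path.Homotopic.setoid

theorem path_cast_rfl {X : Type*} [TopologicalSpace X] {x y : X} (p : Path x y) :
    p.cast rfl rfl = p :=
  Path.ext (by rw [Path.cast_coe])

theorem homotopic_cast_iff {X : Type*} [TopologicalSpace X] {x y x' y' : X}
    (hx : x' = x) (hy : y' = y) (p q : Path x y) :
    (p.cast hx hy).Homotopic (q.cast hx hy) ↔ p.Homotopic q := by
  subst hx; subst hy
  rw [path_cast_rfl, path_cast_rfl]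

theorem trans_forall {X : Type*} [TopologicalSpace X] {x y z : X} {p : Path x y} {q : Path y z}
    {Pr : X → Prop} (hp : ∀ t, Pr (p t)) (hq : ∀ t, Pr (q t)) : ∀ t, Pr ((p.trans q) t) := by
  intro t
  rw [Path.trans_apply]
  split_ifs
  · exact hp _
  · exact hq _

theorem symm_forall {X : Type*} [TopologicalSpace X] {x y : X} {p : Path x y}
    {Pr : X → Prop} (hp : ∀ t, Pr (p t)) : ∀ t, Pr (p.symm t) := fun t => hp _

theorem homeomorph_simplyConnected {X Y : Type u} [TopologicalSpace X] [TopologicalSpace Y]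
    (h : X ≃ₜ Y) [SimplyConnectedSpace Y] : SimplyConnectedSpace X :=
  ⟨⟨((FundamentalGroupoidFunctor.equivOfHomotopyEquiv
      (show ContinuousMap.HomotopyEquiv (TopCat.of X) (TopCat.of Y) from h.toHomotopyEquiv) :
        FundamentalGroupoid X ≌ FundamentalGroupoid Y)).trans
    (inferInstance : SimplyConnectedSpace Y).equiv_unit.some⟩⟩

theorem homeomorph_pathConnected {X Y : Type*} [TopologicalSpace X] [TopologicalSpace Y]
    (h : X ≃ₜ Y) [PathConnectedSpace Y] : PathConnectedSpace X := by
  refine ⟨⟨h.symm (Classical.arbitrary Y)⟩, fun x y => ?_⟩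
  obtain ⟨p⟩ := PathConnectedSpace.joined (h x) (h y)
  exact ⟨(p.map h.symm.continuous).cast (h.symm_apply_apply x).symm
    (h.symm_apply_apply y).symm⟩

variable {F B Z : Type u} [TopologicalSpace F] [TopologicalSpace B] [TopologicalSpace Z]
variable {proj : Z → B}

theorem fiber_simply [PathConnectedSpace F] [SimplyConnectedSpace F]
    (htriv : ∀ b : B, ∃ e : Bundle.Trivialization F proj, b ∈ e.baseSet) (b : B) :
    SimplyConnectedSpace (proj ⁻¹' {b}) := by
  obtain ⟨e, hb⟩ := htriv b
  exact homeomorph_simplyConnected (e.preimageSingletonHomeomorph hb)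

theorem fiber_pathConnected [PathConnectedSpace F]
    (htriv : ∀ b : B, ∃ e : Bundle.Trivialization F proj, b ∈ e.baseSet) (b : B) :
    PathConnectedSpace (proj ⁻¹' {b}) := by
  obtain ⟨e, hb⟩ := htriv b
  exact homeomorph_pathConnected (e.preimageSingletonHomeomorph hb)

theorem fiber_paths_homotopic [PathConnectedSpace F] [SimplyConnectedSpace F]
    (htriv : ∀ b : B, ∃ e : Bundle.Trivialization F proj, b ∈ e.baseSet) {b : B} {x y : Z}
    (p q : Path x y) (hp : ∀ t, proj (p t) = b) (hq : ∀ t, proj (q t) = b) :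
    p.Homotopic q := by
  haveI := fiber_simply htriv b
  have hx : proj x = b := by have := hp 0; rwa [p.source] at this
  have hy : proj y = b := by have := hp 1; rwa [p.target] at this
  let p' : Path (⟨x, hx⟩ : proj ⁻¹' {b}) ⟨y, hy⟩ :=
    ⟨⟨fun t => ⟨p t, hp t⟩, p.continuous.subtype_mk _⟩, Subtype.ext p.source, Subtype.ext p.target⟩
  let q' : Path (⟨x, hx⟩ : proj ⁻¹' {b}) ⟨y, hy⟩ :=
    ⟨⟨fun t => ⟨q t, hq t⟩, q.continuous.subtype_mk _⟩, Subtype.ext q.source, Subtype.ext q.target⟩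
  have h' : p'.Homotopic q' := SimplyConnectedSpace.paths_homotopic p' q'
  have h'' := Path.Homotopic.map h' ⟨Subtype.val, continuous_subtype_val⟩
  have hpmap : p'.map continuous_subtype_val = p := Path.ext rfl
  have hqmap : q'.map continuous_subtype_val = q := Path.ext rfl
  rwa [hpmap, hqmap] at h''

theorem fiber_joined [PathConnectedSpace F]
    (htriv : ∀ b : B, ∃ e : Bundle.Trivialization F proj, b ∈ e.baseSet) {b : B} {x y : Z}
    (hx : proj x = b) (hy : proj y = b) :
    ∃ p : Path x y, ∀ t, proj (p t) = b := by
  haveI := fiber_pathConnected htriv b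
  let p' := PathConnectedSpace.somePath (⟨x, hx⟩ : proj ⁻¹' {b}) ⟨y, hy⟩
  exact ⟨p'.map continuous_subtype_val, fun t => (p' t).2⟩

theorem square_boundary {X : Type*} [TopologicalSpace X] {L : ℝ × ℝ → X}
    (hL : ContinuousOn L (Icc 0 1 ×ˢ Icc 0 1)) :
    ∃ (pL : Path (L (0,0)) (L (0,1))) (pB : Path (L (0,0)) (L (1,0)))
      (pR : Path (L (1,0)) (L (1,1))) (pT : Path (L (0,1)) (L (1,1))),
      (∀ t : unitInterval, pL t = L (0, (t:ℝ))) ∧ (∀ s : unitInterval, pB s = L ((s:ℝ), 0)) ∧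
      (∀ t : unitInterval, pR t = L (1, (t:ℝ))) ∧ (∀ s : unitInterval, pT s = L ((s:ℝ), 1)) ∧
      pL.Homotopic ((pB.trans pR).trans pT.symm) := by
  set S : Set (ℝ × ℝ) := Icc 0 1 ×ˢ Icc 0 1 with hS
  haveI : ContractibleSpace S := by
    refine Convex.contractibleSpace ((convex_Icc (0:ℝ) 1).prod (convex_Icc (0:ℝ) 1)) ?_
    exact ⟨(0, 0), ⟨le_rfl, zero_le_one⟩, ⟨le_rfl, zero_le_one⟩⟩
  let Lc : C(S, X) := ⟨S.restrict L, hL.restrict⟩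
  have hmem : ∀ s t : unitInterval, (((s:ℝ)), ((t:ℝ))) ∈ S := fun s t => ⟨s.2, t.2⟩
  have hmem01 : ((0:ℝ), (1:ℝ)) ∈ S := ⟨⟨le_rfl, zero_le_one⟩, ⟨zero_le_one, le_rfl⟩⟩
  have hmem00 : ((0:ℝ), (0:ℝ)) ∈ S := ⟨⟨le_rfl, zero_le_one⟩, ⟨le_rfl, zero_le_one⟩⟩
  have hmem10 : ((1:ℝ), (0:ℝ)) ∈ S := ⟨⟨zero_le_one, le_rfl⟩, ⟨le_rfl, zero_le_one⟩⟩
  have hmem11 : ((1:ℝ), (1:ℝ)) ∈ S := ⟨⟨zero_le_one, le_rfl⟩, ⟨zero_le_one, le_rfl⟩⟩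
  let c00 : S := ⟨((0:ℝ), (0:ℝ)), hmem00⟩
  let c01 : S := ⟨((0:ℝ), (1:ℝ)), hmem01⟩
  let c10 : S := ⟨((1:ℝ), (0:ℝ)), hmem10⟩
  let c11 : S := ⟨((1:ℝ), (1:ℝ)), hmem11⟩
  let eL : Path c00 c01 :=
    { toFun := fun t => ⟨((0:ℝ), (t:ℝ)), hmem 0 t⟩
      continuous_toFun := by fun_prop
      source' := Subtype.ext (by norm_num [Prod.ext_iff])
      target' := Subtype.ext (by norm_num [Prod.ext_iff]) }
  let eB : Path c00 c10 :=
    { toFun := fun s => ⟨((s:ℝ), (0:ℝ)), hmem s 0⟩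
      continuous_toFun := by fun_prop
      source' := Subtype.ext (by norm_num [Prod.ext_iff])
      target' := Subtype.ext (by norm_num [Prod.ext_iff]) }
  let eR : Path c10 c11 :=
    { toFun := fun t => ⟨((1:ℝ), (t:ℝ)), hmem 1 t⟩
      continuous_toFun := by fun_prop
      source' := Subtype.ext (by norm_num [Prod.ext_iff])
      target' := Subtype.ext (by norm_num [Prod.ext_iff]) }
  let eT : Path c01 c11 :=
    { toFun := fun s => ⟨((s:ℝ), (1:ℝ)), hmem s 1⟩
      continuous_toFun := by fun_prop
      source' := Subtype.ext (by norm_num [Prod.ext_iff])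
      target' := Subtype.ext (by norm_num [Prod.ext_iff]) }
  have hom : eL.Homotopic ((eB.trans eR).trans eT.symm) :=
    SimplyConnectedSpace.paths_homotopic _ _
  have h2 := Path.Homotopic.map hom Lc
  rw [Path.map_trans, Path.map_trans, ← Path.map_symm] at h2
  exact ⟨eL.map Lc.continuous, eB.map Lc.continuous, eR.map Lc.continuous, eT.map Lc.continuous,
    fun t => rfl, fun s => rfl, fun t => rfl, fun s => rfl, h2⟩

end Hom


/-- The group homomorphism `π₁(X, x) → π₁(Y, f x)` induced on fundamental groups by a
pointed continuous map, obtained from the fundamental groupoid functor. -/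
noncomputable def piOneMap {X Y : Type u} [TopologicalSpace X] [TopologicalSpace Y]
    (f : C(X, Y)) (x : X) :
    FundamentalGroup X x →* FundamentalGroup Y (f x) :=
  CategoryTheory.Functor.mapEnd ⟨x⟩ (πₘ (TopCat.ofHom f))

/-- If `proj : Z → B` is a fiber bundle whose fiber `F` is path-connected and
simply connected, and whose base `B` is path-connected and paracompact, then for every
`z : Z` the induced map `π₁(Z, z) → π₁(B, proj z)` is an isomorphism. -/
theorem fiberBundle_simplyConnected_fiber_pi1_iso
    {F B Z : Type u} [TopologicalSpace F] [TopologicalSpace B] [TopologicalSpace Z]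
    [PathConnectedSpace F] [SimplyConnectedSpace F]
    [PathConnectedSpace B] [ParacompactSpace B]
    (proj : Z → B) (hproj : Continuous proj) (hsurj : Function.Surjective proj)
    (htriv : ∀ b : B, ∃ e : Bundle.Trivialization F proj, b ∈ e.baseSet) (z : Z) :
    Function.Bijective (piOneMap ⟨proj, hproj⟩ z) := by
  classical
  set pc : C(Z, B) := ⟨proj, hproj⟩ with hpc
  set pr : ℝ → unitInterval := Set.projIcc (0:ℝ) 1 zero_le_one with hpr
  have hpr0 : pr 0 = 0 := Set.projIcc_left _
  have hpr1 : pr 1 = 1 := Set.projIcc_right _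
  have hprval : ∀ t : unitInterval, pr (t : ℝ) = t := fun t => Set.projIcc_val zero_le_one t
  constructor
  · -- injectivity
    rw [injective_iff_map_eq_one]
    intro g hg
    have h1 : (Path.Homotopic.Quotient.map (g : Path.Homotopic.Quotient z z) pc :
        Path.Homotopic.Quotient (pc z) (pc z)) = ⟦Path.refl (pc z)⟧ := hg
    obtain ⟨γp, hγp⟩ : ∃ p : Path z z, (⟦p⟧ : Path.Homotopic.Quotient z z) = g :=
      Quotient.exists_rep _
    have hclass : (⟦γp.map pc.continuous⟧ : Path.Homotopic.Quotient (pc z) (pc z))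
        = ⟦Path.refl (pc z)⟧ := by
      rw [show (⟦γp.map pc.continuous⟧ : Path.Homotopic.Quotient (pc z) (pc z)) =
          Path.Homotopic.Quotient.map ⟦γp⟧ pc from rfl, hγp]
      exact h1
    have hrel : (γp.map pc.continuous).Homotopic (Path.refl (proj z)) := Quotient.eq.mp hclass
    obtain ⟨Hty⟩ := hrel
    set K : ℝ × ℝ → B := fun p => Hty (pr p.1, pr p.2) with hKdef
    have hK : Continuous K := Hty.continuous.comp
      ((continuous_projIcc.comp continuous_fst).prodMk (continuous_projIcc.comp continuous_snd))
    set γℝ : ℝ → Z := fun t => γp (pr t) with hγℝ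
    have hγcont : Continuous γℝ := γp.continuous.comp continuous_projIcc
    have hγproj : ∀ t, proj (γℝ t) = K (0, t) := by
      intro t
      show proj (γp (pr t)) = Hty (pr 0, pr t)
      rw [hpr0, Hty.apply_zero]
      rfl
    obtain ⟨L, hLcont, hLproj, hLedge⟩ := square_lift htriv hK hγcont hγproj
    have hmem00 : ((0:ℝ), (0:ℝ)) ∈ Set.Icc (0:ℝ) 1 ×ˢ Set.Icc (0:ℝ) 1 :=
      ⟨⟨le_rfl, zero_le_one⟩, ⟨le_rfl, zero_le_one⟩⟩
    have hx0 : L ((0:ℝ), (0:ℝ)) = z := by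
      rw [hLedge 0 ⟨le_rfl, zero_le_one⟩]
      show γp (pr 0) = z
      rw [hpr0]
      exact γp.source
    have hy0 : L ((0:ℝ), (1:ℝ)) = z := by
      rw [hLedge 1 ⟨zero_le_one, le_rfl⟩]
      show γp (pr 1) = z
      rw [hpr1]
      exact γp.target
    obtain ⟨pL, pB, pR, pT, hpLpt, hpBpt, hpRpt, hpTpt, hom1⟩ := square_boundary hLcont
    have h01 : (0:unitInterval) ∈ ({0, 1} : Set unitInterval) := Set.mem_insert _ _
    have h11 : (1:unitInterval) ∈ ({0, 1} : Set unitInterval) := Set.mem_insert_of_mem _ rfl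
    have hpL : pL = γp.cast hx0 hy0 := by
      apply Path.ext
      funext t
      rw [hpLpt t, hLedge (t:ℝ) t.2]
      show γp (pr (t:ℝ)) = (γp.cast hx0 hy0) t
      rw [hprval t, Path.cast_coe]
    have hBfib : ∀ s, proj (pB s) = proj z := by
      intro s
      rw [hpBpt s, hLproj _ ⟨s.2, ⟨le_rfl, zero_le_one⟩⟩]
      show Hty (pr (s:ℝ), pr 0) = proj z
      rw [hpr0, Hty.eq_fst _ h01]
      show proj (γp 0) = proj z
      rw [γp.source]
    have hTfib : ∀ s, proj (pT s) = proj z := by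
      intro s
      rw [hpTpt s, hLproj _ ⟨s.2, ⟨zero_le_one, le_rfl⟩⟩]
      show Hty (pr (s:ℝ), pr 1) = proj z
      rw [hpr1, Hty.eq_fst _ h11]
      show proj (γp 1) = proj z
      rw [γp.target]
    have hRfib : ∀ t, proj (pR t) = proj z := by
      intro t
      rw [hpRpt t, hLproj _ ⟨⟨zero_le_one, le_rfl⟩, t.2⟩]
      show Hty (pr 1, pr (t:ℝ)) = proj z
      rw [hpr1, Hty.apply_one]
      rfl
    have hWfib : ∀ t, proj (((pB.trans pR).trans pT.symm) t) = proj z :=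
      trans_forall (Pr := fun w => proj w = proj z)
        (trans_forall (Pr := fun w => proj w = proj z) hBfib hRfib)
        (symm_forall (Pr := fun w => proj w = proj z) hTfib)
    have h2 : ((pB.trans pR).trans pT.symm).Homotopic ((Path.refl z).cast hx0 hy0) := by
      refine fiber_paths_homotopic htriv _ _ hWfib ?_
      intro t
      have : ((Path.refl z).cast hx0 hy0) t = z := by
        rw [Path.cast_coe]
        rfl
      rw [this]
    rw [hpL] at hom1
    have hfinal : γp.Homotopic (Path.refl z) :=
      (homotopic_cast_iff hx0 hy0 γp (Path.refl z)).mp (hom1.trans h2)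
    have hghom : g = 𝟙 (⟨z⟩ : FundamentalGroupoid Z) := by
      rw [← hγp]
      exact Quotient.sound hfinal
    exact hghom
  · -- surjectivity
    intro h
    obtain ⟨β, hβ⟩ : ∃ p : Path (proj z) (proj z),
        (⟦p⟧ : Path.Homotopic.Quotient (proj z) (proj z)) = h := Quotient.exists_rep _
    set K : ℝ × ℝ → B := fun p => β (pr (p.1 * p.2)) with hKdef
    have hK : Continuous K := β.continuous.comp
      (continuous_projIcc.comp (continuous_fst.mul continuous_snd))
    have hγproj : ∀ t : ℝ, proj ((fun _ : ℝ => z) t) = K (0, t) := by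
      intro t
      show proj z = β (pr (0 * t))
      rw [zero_mul, hpr0]
      exact β.source.symm
    obtain ⟨L, hLcont, hLproj, hLedge⟩ := square_lift htriv hK continuous_const hγproj
    have hsq : ∀ {x y : ℝ}, x ∈ Set.Icc (0:ℝ) 1 → y ∈ Set.Icc (0:ℝ) 1 →
        ((x, y) : ℝ × ℝ) ∈ Set.Icc (0:ℝ) 1 ×ˢ Set.Icc (0:ℝ) 1 := fun hx hy => ⟨hx, hy⟩
    let α : Path z (L ((1:ℝ), (0:ℝ))) :=
      { toFun := fun s => L ((s:ℝ), 0)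
        continuous_toFun := hLcont.comp_continuous (by fun_prop)
          (fun s => hsq s.2 ⟨le_rfl, zero_le_one⟩)
        source' := hLedge 0 ⟨le_rfl, zero_le_one⟩
        target' := rfl }
    let ρ : Path (L ((1:ℝ), (0:ℝ))) (L ((1:ℝ), (1:ℝ))) :=
      { toFun := fun t => L (1, (t:ℝ))
        continuous_toFun := hLcont.comp_continuous (by fun_prop)
          (fun t => hsq ⟨zero_le_one, le_rfl⟩ t.2)
        source' := rfl
        target' := rfl }
    have h11 : proj (L ((1:ℝ), (1:ℝ))) = proj z := by
      rw [hLproj _ (hsq ⟨zero_le_one, le_rfl⟩ ⟨zero_le_one, le_rfl⟩)]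
      show β (pr (1 * 1)) = proj z
      rw [one_mul, hpr1]
      exact β.target
    obtain ⟨δp, hδp⟩ := fiber_joined htriv h11 rfl
    set g0 : Path z z := (α.trans ρ).trans δp with hg0
    set f : unitInterval → unitInterval := fun t => pr (4 * (t:ℝ) - 1) with hf
    have hfc : Continuous f := continuous_projIcc.comp (by fun_prop)
    have hf0 : f 0 = 0 := by
      show pr (4 * ((0:unitInterval):ℝ) - 1) = 0
      rw [show (4 * ((0:unitInterval):ℝ) - 1) = -1 by norm_num]
      rw [hpr, Set.projIcc_of_le_left _ (by norm_num)]
      rfl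
    have hf1 : f 1 = 1 := by
      show pr (4 * ((1:unitInterval):ℝ) - 1) = 1
      rw [show (4 * ((1:unitInterval):ℝ) - 1) = 3 by norm_num]
      rw [hpr, Set.projIcc_of_right_le _ (by norm_num)]
      rfl
    have hclaim : g0.map hproj = β.reparam f hfc hf0 hf1 := by
      apply Path.ext
      funext t
      show proj (g0 t) = (β.reparam f hfc hf0 hf1) t
      rw [Path.coe_reparam]
      show proj (((α.trans ρ).trans δp) t) = β (f t)
      rw [Path.trans_apply]
      split_ifs with ht
      · rw [Path.trans_apply]
        split_ifs with ht2
        · -- t ≤ 1/4 region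
          show proj (L (2 * (2 * (t:ℝ)), 0)) = β (f t)
          rw [hLproj _ (hsq ⟨by nlinarith [t.2.1], by nlinarith⟩ ⟨le_rfl, zero_le_one⟩)]
          show β (pr (2 * (2 * (t:ℝ)) * 0)) = β (f t)
          have hft : f t = 0 := by
            show pr (4 * (t:ℝ) - 1) = 0
            rw [hpr, Set.projIcc_of_le_left _ (by nlinarith)]
            rfl
          rw [mul_zero, hpr0, hft]
        · -- 1/4 ≤ t ≤ 1/2 region
          show proj (L (1, 2 * (2 * (t:ℝ)) - 1)) = β (f t)
          push_neg at ht2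
          rw [hLproj _ (hsq ⟨zero_le_one, le_rfl⟩ ⟨by nlinarith, by nlinarith⟩)]
          show β (pr (1 * (2 * (2 * (t:ℝ)) - 1))) = β (f t)
          have harg : 1 * (2 * (2 * (t:ℝ)) - 1) = 4 * (t:ℝ) - 1 := by ring
          rw [harg]
      · -- t ≥ 1/2 region
        push_neg at ht
        show proj (δp ⟨2 * (t:ℝ) - 1, _⟩) = β (f t)
        rw [hδp _]
        have hft : f t = 1 := by
          show pr (4 * (t:ℝ) - 1) = 1
          rw [hpr, Set.projIcc_of_right_le _ (by nlinarith)]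
          rfl
        rw [hft]
        exact β.target.symm
    have hrep : (g0.map pc.continuous).Homotopic β := by
      have h3 : (g0.map hproj).Homotopic β := by
        rw [hclaim]
        exact (Path.Homotopic.symm ⟨Path.Homotopy.reparam β f hfc hf0 hf1⟩)
      exact h3
    let q0 : (⟨z⟩ : FundamentalGroupoid Z) ⟶ ⟨z⟩ := ⟦g0⟧
    refine ⟨q0, ?_⟩
    show (Path.Homotopic.Quotient.map (⟦g0⟧ : Path.Homotopic.Quotient z z) pc :
      Path.Homotopic.Quotient (pc z) (pc z)) = h
    rw [← hβ]
    exact Quotient.sound hrep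
end

section
/- Let M be a compact Hausdorff topological manifold (a compact Hausdorff topological space locally homeomorphic to ℝⁿ for some fixed n). Then for every x ∈ M, the fundamental group π₁(M, x) is countable. -/
/- Auxiliary development: the fundamental group of a compact metrizable topological manifold is
countable.  Strategy: every point has arbitrarily small "good" neighbourhoods (chart preimages of
Euclidean balls) in which any two paths with common endpoints are homotopic; a Lebesgue-number /
subdivision argument then shows that any two uniformly close loops are homotopic, so homotopy
classes of loops are open in the (second countable) space of loops, hence countable. -/

open Set Metric unitInterval

noncomputable section

namespace LoopCountable

variable {X : Type*} [TopologicalSpace X]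

/-- A "good" set: open, internally path connected, and any two paths inside it with the same
endpoints are homotopic (in the ambient space). -/
def GoodSet (V : Set X) : Prop :=
  IsOpen V ∧ (∀ p ∈ V, ∀ q ∈ V, JoinedIn V p q) ∧
    ∀ (p q : X) (α β : Path p q), Set.range α ⊆ V → Set.range β ⊆ V → α.Homotopic β

/-- The subpath of `γ` from parameter `s` to parameter `t` (affine reparametrization). -/
def subpath {a b : X} (γ : Path a b) (s t : ℝ) : Path (γ.extend s) (γ.extend t) where
  toFun u := γ.extend ((1 - (u : ℝ)) * s + u * t)
  continuous_toFun := by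
    apply γ.continuous_extend.comp
    fun_prop
  source' := by norm_num
  target' := by norm_num

@[simp] theorem subpath_apply {a b : X} (γ : Path a b) (s t : ℝ) (u : I) :
    subpath γ s t u = γ.extend ((1 - (u : ℝ)) * s + u * t) := rfl

theorem subpath_mem {s t : ℝ} (hst : s ≤ t) (u : I) :
    (1 - (u : ℝ)) * s + u * t ∈ Icc s t := by
  have h0 := u.2.1
  have h1 := u.2.2
  constructor <;> nlinarith

theorem range_subpath_subset {a b : X} (γ : Path a b) {s t : ℝ} (hst : s ≤ t) :
    Set.range (subpath γ s t) ⊆ γ.extend '' Icc s t := by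
  rintro _ ⟨u, rfl⟩
  exact ⟨_, subpath_mem hst u, rfl⟩

/-- Splitting a subpath at an intermediate parameter, up to homotopy. -/
theorem subpath_homotopic_trans {a b : X} (γ : Path a b) {s t u : ℝ}
    (hst : s ≤ t) (htu : t ≤ u) (hsu : s < u) :
    (subpath γ s u).Homotopic ((subpath γ s t).trans (subpath γ t u)) := by
  set h : I → ℝ := fun v => if (v : ℝ) ≤ 1 / 2 then s + 2 * v * (t - s) else t + (2 * v - 1) * (u - t)
    with hh
  have husne : u - s ≠ 0 := by linarith
  have hcont : Continuous h := by
    apply Continuous.if_le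
    · fun_prop
    · fun_prop
    · fun_prop
    · fun_prop
    · intro v hv
      rw [hv]; ring
  have hmem : ∀ v : I, h v ∈ Icc s u := by
    intro v
    have h0 := v.2.1
    have h1 := v.2.2
    rw [hh]
    dsimp only
    split_ifs with hv
    · constructor <;> nlinarith
    · push_neg at hv
      constructor <;> nlinarith
  set f : I → I := fun v => ⟨(h v - s) / (u - s), by
    have := hmem v
    constructor
    · apply div_nonneg (by linarith [this.1]) (by linarith)
    · rw [div_le_one (by linarith)]
      linarith [this.2]⟩ with hf
  have hfc : Continuous f := by
    apply Continuous.subtype_mk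
    fun_prop
  have hf0 : f 0 = 0 := by
    rw [hf]
    ext
    simp only [h]
    norm_num
  have hf1 : f 1 = 1 := by
    rw [hf]
    ext
    simp only [h]
    norm_num
    exact husne
  have key : (subpath γ s u).reparam f hfc hf0 hf1 = (subpath γ s t).trans (subpath γ t u) := by
    ext v
    rw [Path.trans_apply]
    simp only [Path.coe_reparam, Function.comp_apply, subpath_apply]
    have harg : (1 - ((f v : I) : ℝ)) * s + (f v : I) * u = h v := by
      have : ((f v : I) : ℝ) = (h v - s) / (u - s) := rfl
      rw [this]
      field_simp
      ring
    rw [harg]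
    split_ifs with hv
    · simp only [subpath_apply, hh, if_pos hv]
      show γ.extend (s + 2 * (v:ℝ) * (t - s)) =
        γ.extend ((1 - 2 * (v:ℝ)) * s + 2 * (v:ℝ) * t)
      congr 1; ring
    · simp only [subpath_apply, hh, if_neg hv]
      show γ.extend (t + (2 * (v:ℝ) - 1) * (u - t)) =
        γ.extend ((1 - (2 * (v:ℝ) - 1)) * t + (2 * (v:ℝ) - 1) * u)
      congr 1; ring
  exact ⟨(Path.Homotopy.reparam (subpath γ s u) f hfc hf0 hf1).cast rfl key⟩



theorem homotopic_of_coe_eq {a b a' b' : X} {p q : Path a b} {p' q' : Path a' b'}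
    (ha : a = a') (hb : b = b') (hp : (p : I → X) = (p' : I → X)) (hq : (q : I → X) = (q' : I → X))
    (h : p.Homotopic q) : p'.Homotopic q' := by
  subst ha; subst hb
  obtain rfl : p = p' := Path.ext hp
  obtain rfl : q = q' := Path.ext hq
  exact h

theorem exists_goodSet {n : ℕ} {M : Type*} [TopologicalSpace M] [MetricSpace M]
    [ChartedSpace (EuclideanSpace ℝ (Fin n)) M] (p : M) {U : Set M} (hU : U ∈ nhds p) :
    ∃ V : Set M, GoodSet V ∧ p ∈ V ∧ V ⊆ U := by
  classical
  set E := EuclideanSpace ℝ (Fin n)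
  set e := chartAt E p with he
  have hps : p ∈ e.source := mem_chart_source E p
  obtain ⟨U', hU'U, hU'o, hpU'⟩ := mem_nhds_iff.mp hU
  set S : Set M := e.source ∩ U' with hS
  have hSo : IsOpen S := e.open_source.inter hU'o
  have hpS : p ∈ S := ⟨hps, hpU'⟩
  have himg : IsOpen (e '' S) := e.isOpen_image_of_subset_source hSo inter_subset_left
  have hpe : e p ∈ e '' S := mem_image_of_mem e hpS
  obtain ⟨r, hr0, hrsub⟩ := Metric.isOpen_iff.mp himg _ hpe
  have himgtgt : e '' S ⊆ e.target := fun z hz => by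
    obtain ⟨w, hw, rfl⟩ := hz
    exact e.map_source hw.1
  have hballS : ball (e p) r ⊆ e '' S := hrsub
  have hballtgt : ball (e p) r ⊆ e.target := hballS.trans himgtgt
  set V : Set M := e.source ∩ e ⁻¹' ball (e p) r with hV
  have hVU : V ⊆ U := by
    rintro z ⟨hz1, hz2⟩
    obtain ⟨w, hwS, hwe⟩ := hballS hz2
    have : w = z := e.injOn hwS.1 hz1 hwe
    exact hU'U (this ▸ hwS.2)
  have hVsrc : V ⊆ e.source := inter_subset_left
  have hVball : ∀ z ∈ V, e z ∈ ball (e p) r := fun z hz => hz.2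
  have hconv : Convex ℝ (ball (e p) r) := convex_ball _ _
  -- membership of the straight-line interpolation
  have hcombo : ∀ (z w : E), z ∈ ball (e p) r → w ∈ ball (e p) r → ∀ s : I,
      (1 - (s : ℝ)) • z + (s : ℝ) • w ∈ ball (e p) r := by
    intro z w hz hw s
    exact hconv hz hw (by linarith [s.2.2]) s.2.1 (by ring)
  have hsymmV : ∀ z ∈ ball (e p) r, e.symm z ∈ V := by
    intro z hz
    refine ⟨e.map_target (hballtgt hz), ?_⟩
    rw [mem_preimage, e.right_inv (hballtgt hz)]
    exact hz
  refine ⟨V, ⟨e.isOpen_inter_preimage isOpen_ball, ?_, ?_⟩, ⟨hps, by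
    rw [mem_preimage]; exact mem_ball_self hr0⟩, hVU⟩
  · -- joined in V
    intro a ha b hb
    have haB := hVball a ha
    have hbB := hVball b hb
    have hmem : ∀ s : I, (1 - (s : ℝ)) • e a + (s : ℝ) • e b ∈ ball (e p) r :=
      hcombo _ _ haB hbB
    refine ⟨⟨⟨fun s => e.symm ((1 - (s : ℝ)) • e a + (s : ℝ) • e b), ?_⟩, ?_, ?_⟩, ?_⟩
    · exact e.continuousOn_symm.comp_continuous (by fun_prop) fun s => hballtgt (hmem s)
    · show e.symm ((1 - ((0 : I) : ℝ)) • e a + ((0 : I) : ℝ) • e b) = a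
      norm_num
      exact e.left_inv ha.1
    · show e.symm ((1 - ((1 : I) : ℝ)) • e a + ((1 : I) : ℝ) • e b) = b
      norm_num
      exact e.left_inv hb.1
    · intro s
      exact hsymmV _ (hmem s)
  · -- homotopies in V
    intro a b α β hα hβ
    have hαV : ∀ t, α t ∈ V := fun t => hα (mem_range_self t)
    have hβV : ∀ t, β t ∈ V := fun t => hβ (mem_range_self t)
    have hαB : ∀ t, e (α t) ∈ ball (e p) r := fun t => hVball _ (hαV t)
    have hβB : ∀ t, e (β t) ∈ ball (e p) r := fun t => hVball _ (hβV t)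
    have heα : Continuous fun t => e (α t) :=
      e.continuousOn.comp_continuous α.continuous fun t => (hαV t).1
    have heβ : Continuous fun t => e (β t) :=
      e.continuousOn.comp_continuous β.continuous fun t => (hβV t).1
    have hmem : ∀ q : I × I, (1 - (q.1 : ℝ)) • e (α q.2) + (q.1 : ℝ) • e (β q.2)
        ∈ ball (e p) r := fun q => hcombo _ _ (hαB q.2) (hβB q.2) q.1
    refine ⟨⟨⟨⟨fun q => e.symm ((1 - (q.1 : ℝ)) • e (α q.2) + (q.1 : ℝ) • e (β q.2)), ?_⟩,
      ?_, ?_⟩, ?_⟩⟩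
    · refine e.continuousOn_symm.comp_continuous ?_ fun q => hballtgt (hmem q)
      have h1 : Continuous fun q : I × I => ((q.1 : ℝ)) := by fun_prop
      exact ((continuous_const.sub h1).smul (heα.comp continuous_snd)).add
        (h1.smul (heβ.comp continuous_snd))
    · intro t
      show e.symm ((1 - ((0 : I) : ℝ)) • e (α t) + ((0 : I) : ℝ) • e (β t)) = α t
      norm_num
      exact e.left_inv (hαV t).1
    · intro t
      show e.symm ((1 - ((1 : I) : ℝ)) • e (α t) + ((1 : I) : ℝ) • e (β t)) = β t
      norm_num
      exact e.left_inv (hβV t).1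
    · intro s t ht
      cases ht with
      | inl ht =>
        subst ht
        show e.symm ((1 - (s : ℝ)) • e (α 0) + (s : ℝ) • e (β 0)) = _
        rw [α.source, β.source, ← add_smul]
        norm_num
        exact e.left_inv (α.source ▸ (hαV 0).1)
      | inr ht =>
        rw [mem_singleton_iff] at ht
        subst ht
        show e.symm ((1 - (s : ℝ)) • e (α 1) + (s : ℝ) • e (β 1)) = _
        rw [α.target, β.target, ← add_smul]
        norm_num
        exact e.left_inv (α.target ▸ (hαV 1).1)


variable {X : Type*} [TopologicalSpace X]

theorem trans_coe_congr {a b c a' b' c' : X} {p : Path a b} {q : Path b c} {p' : Path a' b'}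
    {q' : Path b' c'} (hp : (p : I → X) = (p' : I → X)) (hq : (q : I → X) = (q' : I → X)) :
    ((p.trans q) : I → X) = ((p'.trans q') : I → X) := by
  funext t
  rw [Path.trans_apply, Path.trans_apply]
  split_ifs
  · exact congrFun hp _
  · exact congrFun hq _


theorem exists_eps_homotopic {n : ℕ} {M : Type*} [MetricSpace M]
    [ChartedSpace (EuclideanSpace ℝ (Fin n)) M] [CompactSpace M] (x : M) (γ : Path x x) :
    ∃ ε > 0, ∀ γ' : Path x x, (∀ t, dist (γ t) (γ' t) < ε) → γ.Homotopic γ' := by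
  classical
  -- Lebesgue number for the cover by good sets
  have hcover : (univ : Set M) ⊆ ⋃ i : {V : Set M // GoodSet V}, (i : Set M) := by
    intro p _
    obtain ⟨V, hV, hpV, -⟩ := exists_goodSet (n := n) p (U := univ) Filter.univ_mem
    exact mem_iUnion.mpr ⟨⟨V, hV⟩, hpV⟩
  obtain ⟨δ, hδ0, hδ⟩ := lebesgue_number_lemma_of_metric isCompact_univ
    (fun i : {V : Set M // GoodSet V} => i.2.1) hcover
  have hδ' : ∀ p : M, ∃ V : Set M, GoodSet V ∧ ball p δ ⊆ V := by
    intro p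
    obtain ⟨i, hi⟩ := hδ p (mem_univ p)
    exact ⟨i, i.2, hi⟩
  -- uniform continuity
  have huc := Metric.uniformContinuous_iff.mp
    (CompactSpace.uniformContinuous_of_continuous γ.continuous) (δ / 4) (by linarith)
  obtain ⟨η, hη0, hη⟩ := huc
  obtain ⟨m, hm⟩ := exists_nat_one_div_lt hη0
  set k : ℕ := m + 1 with hk
  have hk0 : (0 : ℝ) < k := by positivity
  have hinvk : 1 / (k : ℝ) < η := by exact_mod_cast hm
  set T : ℕ → ℝ := fun j => j / k with hT
  have hT0 : T 0 = 0 := by simp [hT]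
  have hTk : T k = 1 := div_self (ne_of_gt hk0)
  have hT0le : ∀ j, 0 ≤ T j := fun j => div_nonneg (Nat.cast_nonneg j) hk0.le
  have hTle1 : ∀ j, j ≤ k → T j ≤ 1 := fun j hj =>
    (div_le_one hk0).mpr (by exact_mod_cast hj)
  have hTmono : ∀ j, T j ≤ T (j + 1) := fun j => by
    have h : (j : ℝ) ≤ ((j + 1 : ℕ) : ℝ) := by push_cast; linarith
    exact (div_le_div_iff_of_pos_right hk0).mpr h
  have hTstep : ∀ j : ℕ, T (j + 1) - T j = 1 / k := fun j => by
    rw [hT]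
    push_cast
    ring
  have hucI : ∀ s t : ℝ, s ∈ Icc (0:ℝ) 1 → t ∈ Icc (0:ℝ) 1 → |s - t| ≤ 1 / k →
      dist (γ.extend s) (γ.extend t) < δ / 4 := by
    intro s t hs ht hst
    rw [γ.extend_apply hs, γ.extend_apply ht]
    apply hη
    rw [Subtype.dist_eq, Real.dist_eq]
    exact lt_of_le_of_lt hst hinvk
  -- good neighborhoods along γ
  have hWex : ∀ j : ℕ, ∃ (V : Set M) (e : ℝ), GoodSet V ∧ γ.extend (T j) ∈ V ∧
      V ⊆ ball (γ.extend (T j)) (δ / 4) ∧ 0 < e ∧ ball (γ.extend (T j)) e ⊆ V := by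
    intro j
    obtain ⟨V, hV, hmemV, hVsub⟩ := exists_goodSet (n := n) (γ.extend (T j))
      (U := ball (γ.extend (T j)) (δ / 4)) (ball_mem_nhds _ (by linarith))
    obtain ⟨e, he0, hesub⟩ := Metric.isOpen_iff.mp hV.1 _ hmemV
    exact ⟨V, e, hV, hmemV, hVsub, he0, hesub⟩
  choose W εW hWgood hWmem hWball hεW0 hεWsub using hWex
  set ε : ℝ := min (δ / 4)
    ((Finset.range (k + 1)).inf' ⟨0, Finset.mem_range.mpr (Nat.succ_pos k)⟩ εW) with hε
  have hε0 : 0 < ε := lt_min (by linarith)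
    ((Finset.lt_inf'_iff _).mpr fun j _ => hεW0 j)
  have hεδ : ε ≤ δ / 4 := min_le_left _ _
  have hεεW : ∀ j, j ≤ k → ε ≤ εW j := fun j hj =>
    (min_le_right _ _).trans (Finset.inf'_le _ (Finset.mem_range.mpr (Nat.lt_succ_of_le hj)))
  refine ⟨ε, hε0, ?_⟩
  intro γ' hclose
  -- closeness of the extensions
  have hext_eq : ∀ s : ℝ, ∃ t : I, γ.extend s = γ t ∧ γ'.extend s = γ' t :=
    fun s => ⟨Set.projIcc 0 1 zero_le_one s, rfl, rfl⟩
  have hclose' : ∀ s : ℝ, dist (γ.extend s) (γ'.extend s) < ε := by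
    intro s
    obtain ⟨t, h1, h2⟩ := hext_eq s
    rw [h1, h2]
    exact hclose t
  -- connecting paths
  have hσex : ∀ j : ℕ, ∃ σj : Path (γ.extend (T j)) (γ'.extend (T j)),
      ∀ t, σj t ∈ W j := by
    intro j
    have hmem' : γ'.extend (T j) ∈ W j := by
      by_cases hj : j ≤ k
      · apply hεWsub j
        rw [mem_ball, dist_comm]
        exact lt_of_lt_of_le (hclose' (T j)) (hεεW j hj)
      · push_neg at hj
        have h1 : (1 : ℝ) ≤ T j := by
          rw [hT, le_div_iff₀ hk0, one_mul]
          exact_mod_cast hj.le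
        have h2 : γ'.extend (T j) = γ.extend (T j) := by
          rw [γ.extend_of_one_le h1, γ'.extend_of_one_le h1]
        rw [h2]
        exact hWmem j
    exact (hWgood j).2.1 _ (hWmem j) _ hmem'
  choose sg hσW using hσex
  have hσball : ∀ j, ∀ t, sg j t ∈ ball (γ.extend (T j)) (δ / 4) :=
    fun j t => hWball j (hσW j t)
  -- good sets containing whole segments
  have hVex : ∀ j : ℕ, ∃ V : Set M, GoodSet V ∧ ball (γ.extend (T j)) δ ⊆ V := fun j => hδ' _
  choose V hVgood hVball using hVex
  -- segment containments
  have hsegγ : ∀ j, j < k → ∀ s ∈ Icc (T j) (T (j + 1)),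
      dist (γ.extend s) (γ.extend (T j)) < δ / 4 := by
    intro j hj s hs
    apply hucI
    · exact ⟨le_trans (hT0le j) hs.1, le_trans hs.2 (hTle1 _ hj)⟩
    · exact ⟨hT0le j, hTle1 j hj.le⟩
    · have hpos : 0 < 1 / (k : ℝ) := by positivity
      rw [abs_sub_le_iff]
      constructor
      · linarith [hs.2, hTstep j]
      · linarith [hs.1]
  have hAmem : ∀ j, j < k → ∀ u : I, subpath γ (T j) (T (j + 1)) u ∈ V j := by
    intro j hj u
    apply hVball j
    have hmem := subpath_mem (hTmono j) u
    have := hsegγ j hj _ hmem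
    rw [mem_ball]
    show dist (γ.extend _) _ < δ
    linarith
  have hA'mem : ∀ j, j < k → ∀ u : I, subpath γ' (T j) (T (j + 1)) u ∈ V j := by
    intro j hj u
    apply hVball j
    have hmem := subpath_mem (hTmono j) u
    set s := (1 - (u : ℝ)) * T j + u * T (j + 1)
    have h1 := hsegγ j hj s hmem
    have h2 := hclose' s
    rw [mem_ball]
    show dist (γ'.extend s) _ < δ
    calc dist (γ'.extend s) (γ.extend (T j)) ≤
        dist (γ'.extend s) (γ.extend s) + dist (γ.extend s) (γ.extend (T j)) := dist_triangle _ _ _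
      _ < δ := by rw [dist_comm (γ'.extend s) (γ.extend s)]; linarith
  have hσVj : ∀ j, j < k → ∀ t, sg j t ∈ V j := by
    intro j hj t
    apply hVball j
    have := hσball j t
    rw [mem_ball] at this ⊢
    linarith
  have hσVj' : ∀ j, j < k → ∀ t, sg (j + 1) t ∈ V j := by
    intro j hj t
    apply hVball j
    have h1 := hσball (j + 1) t
    have h2 : dist (γ.extend (T (j + 1))) (γ.extend (T j)) < δ / 4 :=
      hsegγ j hj _ ⟨hTmono j, le_refl _⟩
    rw [mem_ball] at h1 ⊢
    calc dist (sg (j + 1) t) (γ.extend (T j)) ≤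
        dist (sg (j + 1) t) (γ.extend (T (j + 1))) + dist (γ.extend (T (j + 1))) (γ.extend (T j)) :=
          dist_triangle _ _ _
      _ < δ := by linarith
  -- the cumulative paths
  set G : (j : ℕ) → Path x (γ.extend (T j)) :=
    fun j => (subpath γ 0 (T j)).cast γ.extend_zero.symm rfl with hG
  set G' : (j : ℕ) → Path x (γ'.extend (T j)) :=
    fun j => (subpath γ' 0 (T j)).cast γ'.extend_zero.symm rfl with hG'
  -- the main induction
  have main : ∀ j, j ≤ k → ((G j).trans (sg j)).Homotopic (G' j) := by
    intro j
    induction j with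
    | zero =>
      intro _
      apply (hWgood 0).2.2 x (γ'.extend (T 0))
      · rw [Path.trans_range]
        apply union_subset
        · rintro _ ⟨t, rfl⟩
          have h1 : (G 0) t = γ.extend (T 0) := by
            show γ.extend ((1 - (t : ℝ)) * 0 + t * T 0) = γ.extend (T 0)
            rw [hT0]; norm_num
          rw [h1]; exact hWmem 0
        · rintro _ ⟨t, rfl⟩; exact hσW 0 t
      · rintro _ ⟨t, rfl⟩
        have h1 : (G' 0) t = γ'.extend (T 0) := by
          show γ'.extend ((1 - (t : ℝ)) * 0 + t * T 0) = γ'.extend (T 0)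
          rw [hT0]; norm_num
        have h2 : γ'.extend (T 0) = γ.extend (T 0) := by
          rw [hT0, γ.extend_zero, γ'.extend_zero]
        rw [h1, h2]; exact hWmem 0
    | succ j IH =>
      intro hj1
      have hjk : j < k := hj1
      have IH' := IH hjk.le
      have hTpos : 0 < T (j + 1) := div_pos (by positivity) hk0
      have hsplitγ := subpath_homotopic_trans γ (hT0le j) (hTmono j) hTpos
      have hsplitγ' := subpath_homotopic_trans γ' (hT0le j) (hTmono j) hTpos
      have L1 : (G (j + 1)).Homotopic ((G j).trans (subpath γ (T j) (T (j + 1)))) :=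
        homotopic_of_coe_eq γ.extend_zero rfl (Path.cast_coe _ _ _).symm
          (trans_coe_congr (Path.cast_coe _ _ _).symm rfl) hsplitγ
      have L1' : (G' (j + 1)).Homotopic ((G' j).trans (subpath γ' (T j) (T (j + 1)))) :=
        homotopic_of_coe_eq γ'.extend_zero rfl (Path.cast_coe _ _ _).symm
          (trans_coe_congr (Path.cast_coe _ _ _).symm rfl) hsplitγ'
      have L4 : ((subpath γ (T j) (T (j + 1))).trans (sg (j + 1))).Homotopic
          ((sg j).trans (subpath γ' (T j) (T (j + 1)))) := by
        apply (hVgood j).2.2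
        · rw [Path.trans_range]
          apply union_subset
          · rintro _ ⟨t, rfl⟩; exact hAmem j hjk t
          · rintro _ ⟨t, rfl⟩; exact hσVj' j hjk t
        · rw [Path.trans_range]
          apply union_subset
          · rintro _ ⟨t, rfl⟩; exact hσVj j hjk t
          · rintro _ ⟨t, rfl⟩; exact hA'mem j hjk t
      have ha : ((G (j + 1)).trans (sg (j + 1))).Homotopic
          (((G j).trans (subpath γ (T j) (T (j + 1)))).trans (sg (j + 1))) :=
        L1.hcomp (Path.Homotopic.refl _)
      have hb : (((G j).trans (subpath γ (T j) (T (j + 1)))).trans (sg (j + 1))).Homotopic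
          ((G j).trans ((subpath γ (T j) (T (j + 1))).trans (sg (j + 1)))) :=
        ⟨Path.Homotopy.transAssoc _ _ _⟩
      have hc : ((G j).trans ((subpath γ (T j) (T (j + 1))).trans (sg (j + 1)))).Homotopic
          ((G j).trans ((sg j).trans (subpath γ' (T j) (T (j + 1))))) :=
        (Path.Homotopic.refl _).hcomp L4
      have hd : ((G j).trans ((sg j).trans (subpath γ' (T j) (T (j + 1))))).Homotopic
          (((G j).trans (sg j)).trans (subpath γ' (T j) (T (j + 1)))) :=
        Path.Homotopic.symm ⟨Path.Homotopy.transAssoc _ _ _⟩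
      have he : (((G j).trans (sg j)).trans (subpath γ' (T j) (T (j + 1)))).Homotopic
          ((G' j).trans (subpath γ' (T j) (T (j + 1)))) :=
        IH'.hcomp (Path.Homotopic.refl _)
      exact ha.trans (hb.trans (hc.trans (hd.trans (he.trans L1'.symm))))
  -- conclusion
  have hx1 : x = γ.extend (T k) := by rw [hTk, γ.extend_one]
  have hx1' : x = γ'.extend (T k) := by rw [hTk, γ'.extend_one]
  set τ : Path x x := (sg k).cast hx1 hx1' with hτdef
  have hGk : ((G k) : I → M) = (γ : I → M) := by
    funext t
    show γ.extend ((1 - (t : ℝ)) * 0 + t * T k) = γ t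
    rw [hTk, show (1 - (t : ℝ)) * 0 + (t : ℝ) * 1 = ((t : I) : ℝ) by ring]
    exact γ.extend_extends' t
  have hG'k : ((G' k) : I → M) = (γ' : I → M) := by
    funext t
    show γ'.extend ((1 - (t : ℝ)) * 0 + t * T k) = γ' t
    rw [hTk, show (1 - (t : ℝ)) * 0 + (t : ℝ) * 1 = ((t : I) : ℝ) by ring]
    exact γ'.extend_extends' t
  have hfinal : (γ.trans τ).Homotopic γ' :=
    homotopic_of_coe_eq rfl hx1'.symm
      (trans_coe_congr hGk (Path.cast_coe _ _ _).symm) hG'k (main k le_rfl)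
  have hτrefl : τ.Homotopic (Path.refl x) := by
    apply (hWgood k).2.2
    · rintro _ ⟨t, rfl⟩
      show (sg k) t ∈ W k
      exact hσW k t
    · rintro _ ⟨t, rfl⟩
      show x ∈ W k
      exact hx1 ▸ hWmem k
  have h1 : γ.Homotopic (γ.trans (Path.refl x)) := Path.Homotopic.symm ⟨Path.Homotopy.transRefl γ⟩
  have h2 : (γ.trans (Path.refl x)).Homotopic (γ.trans τ) :=
    (Path.Homotopic.refl γ).hcomp hτrefl.symm
  exact h1.trans (h2.trans hfinal)


end LoopCountable

/-- The fundamental group of a compact Hausdorff topological manifold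
is countable. -/
theorem fundamentalGroup_countable_of_compact_manifold {n : ℕ} (M : Type*)
    [TopologicalSpace M] [T2Space M] [ChartedSpace (EuclideanSpace ℝ (Fin n)) M]
    [CompactSpace M] (x : M) :
    Countable (FundamentalGroup M x) := by
  classical
  haveI : SecondCountableTopology M :=
    ChartedSpace.secondCountable_of_sigmaCompact (EuclideanSpace ℝ (Fin n)) M
  haveI : TopologicalSpace.MetrizableSpace M :=
    Manifold.metrizableSpace (modelWithCornersSelf ℝ (EuclideanSpace ℝ (Fin n))) M
  letI : MetricSpace M := TopologicalSpace.metrizableSpaceMetric M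
  -- the space of loops at `x` is second countable
  haveI : SecondCountableTopology (Path x x) :=
    (Topology.IsInducing.secondCountableTopology
      (f := ((↑) : Path x x → C(unitInterval, M))) ⟨rfl⟩)
  obtain ⟨D, hDc, hDd⟩ := TopologicalSpace.exists_countable_dense (Path x x)
  haveI := hDc.to_subtype
  -- every homotopy class contains an element of `D`
  have hsurj : Function.Surjective
      (fun d : D => (⟦(d : Path x x)⟧ : Path.Homotopic.Quotient x x)) := by
    intro q
    obtain ⟨γ, rfl⟩ := Quotient.exists_rep q
    obtain ⟨ε, hε0, hε⟩ := LoopCountable.exists_eps_homotopic (n := n) x γ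
    set U : Set (Path x x) :=
      (fun p : Path x x => (p : C(unitInterval, M))) ⁻¹' Metric.ball (γ : C(unitInterval, M)) ε
      with hU
    have hUo : IsOpen U := Metric.isOpen_ball.preimage continuous_induced_dom
    have hγU : γ ∈ U := by
      show (γ : C(unitInterval, M)) ∈ Metric.ball (γ : C(unitInterval, M)) ε
      exact Metric.mem_ball_self hε0
    obtain ⟨d, hdD, hdU⟩ := hDd.exists_mem_open hUo ⟨γ, hγU⟩
    refine ⟨⟨d, hdD⟩, ?_⟩
    have hdist : ∀ t, dist (γ t) (d t) < ε := by
      have : dist ((d : C(unitInterval, M))) ((γ : C(unitInterval, M))) < ε := hdU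
      rw [dist_comm] at this
      exact fun t => (ContinuousMap.dist_lt_iff hε0).mp this t
    exact Quotient.sound (hε d hdist).symm
  haveI hcq : Countable (Path.Homotopic.Quotient x x) := hsurj.countable
  -- the fundamental group injects into the homotopy classes of loops
  have hinj : Function.Injective
      (fun φ : FundamentalGroup M x => (φ : Path.Homotopic.Quotient x x)) :=
    fun a b h => h
  exact Function.Injective.countable (β := Path.Homotopic.Quotient x x) hinj
end
end

section
/- Let (G_i)_{i∈ι} be a family of groups, each of which is torsion-free. Then the free product (coproduct) of the family (G_i)_{i∈ι} is a torsion-free group. -/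
/-- The pre-2025 Mathlib notion: a monoid is torsion-free if no non-identity element
has finite order. -/
def Monoid.IsTorsionFree (G : Type*) [Monoid G] : Prop :=
  ∀ g : G, g ≠ 1 → ¬IsOfFinOrder g

open Monoid Monoid.CoprodI Monoid.CoprodI.NeWord

section Aux

variable {ι : Type*} {G : ι → Type*} [∀ i, Group (G i)]

private theorem aux_prod_ne_one {i j} (w : NeWord G i j) : w.prod ≠ 1 := by
  classical
  intro hw
  have h1 : w.toWord.prod = Word.empty.prod := by
    simpa [NeWord.prod, Word.prod_empty] using hw
  have h2 : w.toWord = Word.empty := Word.equiv.symm.injective h1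
  have h3 : w.toList = ([] : List (Σ i, G i)) := congrArg Word.toList h2
  exact w.toList_ne_nil h3

private theorem aux_head_ne_one {i j} (w : NeWord G i j) : w.head ≠ 1 := by
  induction w with
  | singleton x hx => exact hx
  | append w₁ hne w₂ ih₁ ih₂ => exact ih₁

private theorem aux_replaceHead_length {i j} (x : G i) (hx : x ≠ 1) (w : NeWord G i j) :
    (replaceHead x hx w).toList.length = w.toList.length := by
  induction w with
  | singleton y hy => rfl
  | append w₁ hne w₂ ih₁ ih₂ => simp [replaceHead, ih₁]

private theorem aux_inv_length {i j} (w : NeWord G i j) :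
    w.inv.toList.length = w.toList.length := by
  induction w with
  | singleton y hy => rfl
  | append w₁ hne w₂ ih₁ ih₂ => simp [NeWord.inv, ih₁, ih₂, Nat.add_comm]

private theorem aux_pow_exists {i j} (hij : j ≠ i) (w : NeWord G i j) (n : ℕ) :
    ∃ v : NeWord G i j, v.prod = w.prod ^ (n + 1) := by
  induction n with
  | zero => exact ⟨w, (pow_one _).symm⟩
  | succ n ih =>
    obtain ⟨v, hv⟩ := ih
    exact ⟨NeWord.append w hij v, by rw [append_prod, hv, ← pow_succ']⟩

/-- Tail decomposition of a nonempty reduced word. -/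
private theorem aux_tail_dec {i j} (w : NeWord G i j) :
    (i = j ∧ w.prod = of w.head ∧ w.toList.length = 1) ∨
    ∃ (k : ι) (_ : i ≠ k) (w₂ : NeWord G k j),
      w.prod = of w.head * w₂.prod ∧ w₂.last = w.last ∧
      w₂.toList.length + 1 = w.toList.length := by
  induction w with
  | singleton x hx => exact Or.inl ⟨rfl, by simp, rfl⟩
  | @append i j₁ k₁ l w₁ hne w₂ ih₁ ih₂ =>
    rcases ih₁ with ⟨rfl, hp, hlen⟩ | ⟨k, hik, w₃, hp, hlast, hlen⟩
    · refine Or.inr ⟨k₁, hne, w₂, ?_, by simp, ?_⟩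
      · simp [append_prod, hp]
      · simp [hlen, Nat.add_comm]
    · refine Or.inr ⟨k, hik, NeWord.append w₃ hne w₂, ?_, by simp, ?_⟩
      · simp [append_prod, hp, mul_assoc]
      · simp only [NeWord.toList, List.length_append] at *
        omega

private theorem aux_main (h : ∀ i, Monoid.IsTorsionFree (G i)) :
    ∀ (N : ℕ) {i j} (w : NeWord G i j), w.toList.length ≤ N →
      ∀ n : ℕ, w.prod ^ (n + 1) ≠ 1 := by
  intro N
  induction N using Nat.strong_induction_on with
  | _ N IH =>
    intro i j w hwN n hpow
    by_cases hij : i = j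
    · subst hij
      rcases aux_tail_dec w with ⟨-, hp, -⟩ | ⟨k, hik, w₂, hp, hlast, hlen⟩
      · -- w is a single letter
        have hhead : w.head ^ (n + 1) = 1 := by
          apply of_injective i
          rw [map_pow, map_one, ← hp, hpow]
        exact h i w.head (aux_head_ne_one w)
          (isOfFinOrder_iff_pow_eq_one.mpr ⟨n + 1, n.succ_pos, hhead⟩)
      · -- w = of z * w₂, with w₂.last in the same factor as z
        set z := w.head with hz
        have hconj' : (w₂.prod * of z) ^ (n + 1) = 1 := by
          have heq : w₂.prod * of z = (of z)⁻¹ * w.prod * ((of z)⁻¹)⁻¹ := by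
            rw [hp]; group
          rw [heq, conj_pow, hpow, mul_one]; group
        by_cases hc : w₂.last * z = 1
        · -- the last letter of w₂ cancels z
          rcases aux_tail_dec w₂.inv with ⟨-, hp2, -⟩ | ⟨m, him, v, hp2, -, hlen2⟩
          · -- w₂ is a single letter: then w₂.prod * of z = 1, so w.prod = 1
            have hy : w₂.prod = of w₂.last := by
              have := congrArg (·⁻¹) hp2
              simpa [inv_head] using this
            have h1 : w₂.prod * of z = 1 := by
              rw [hy, ← map_mul, hc, map_one]
            have hw1 : w.prod = 1 := by
              rw [hp]
              calc of z * w₂.prod = of z * (w₂.prod * of z) * (of z)⁻¹ := by group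
                _ = 1 := by rw [h1]; group
            exact aux_prod_ne_one w hw1
          · -- strip the last letter of w₂ as well
            have hy : w₂.prod = v.inv.prod * of w₂.last := by
              have := congrArg (·⁻¹) hp2
              simp only [inv_prod, inv_head, inv_inv, mul_inv_rev, map_inv] at this ⊢
              rw [this]
            have hval : w₂.prod * of z = v.inv.prod := by
              rw [hy, mul_assoc, ← map_mul, hc, map_one, mul_one]
            rw [hval] at hconj'
            have hvN : v.inv.toList.length < N := by
              rw [aux_inv_length]
              have h2 := aux_inv_length w₂
              omega
            exact IH _ hvN v.inv le_rfl n hconj'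
        · -- the last letter of w₂ does not cancel z: merge them
          have hc' : z⁻¹ * w₂.inv.head ≠ 1 := by
            rw [inv_head]
            intro hcc
            apply hc
            have : w₂.last * z = (z⁻¹ * w₂.last⁻¹)⁻¹ := by group
            rw [this, hcc, inv_one]
          have hval : (w₂.inv.mulHead z⁻¹ hc').inv.prod = w₂.prod * of z := by
            rw [inv_prod, mulHead_prod, inv_prod, map_inv]
            group
          rw [← hval] at hconj'
          have hvN : (w₂.inv.mulHead z⁻¹ hc').inv.toList.length < N := by
            rw [aux_inv_length, NeWord.mulHead, aux_replaceHead_length, aux_inv_length]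
            omega
          exact IH _ hvN _ le_rfl n hconj'
    · -- cyclically reduced case: powers stay reduced
      obtain ⟨v, hv⟩ := aux_pow_exists (Ne.symm hij) w n
      exact aux_prod_ne_one v (hv ▸ hpow)

end Aux

/-- The free product (coproduct) of a family of torsion-free groups
is torsion-free. -/
theorem free_product_torsion_free {ι : Type*} (G : ι → Type*) [∀ i, Group (G i)]
    (h : ∀ i, Monoid.IsTorsionFree (G i)) :
    Monoid.IsTorsionFree (Monoid.CoprodI G) := by
  classical
  intro g hg hfin
  obtain ⟨n, hn, hpow⟩ := isOfFinOrder_iff_pow_eq_one.mp hfin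
  have hne : Word.equiv g ≠ Word.empty := by
    intro he
    apply hg
    have := Word.equiv.symm_apply_apply g
    rw [he] at this
    simpa [Word.prod_empty, Word.equiv] using this.symm
  obtain ⟨i, j, w, hw⟩ := NeWord.of_word (Word.equiv g) hne
  have hprod : w.prod = g := by
    have : w.toWord.prod = (Word.equiv g).prod := by rw [hw]
    have h2 : (Word.equiv g).prod = g := Word.equiv.symm_apply_apply g
    rw [NeWord.prod, this, h2]
  obtain ⟨m, rfl⟩ := Nat.exists_eq_add_of_lt hn
  exact aux_main h w.toList.length w le_rfl m (by rw [hprod]; simpa using hpow)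
end
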